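/- arXiv:1605.09329 — 3 statements merged into one kernel-verified Lean document; each statement's English description precedes it below -/
import Mathlib

section
/- Let P_t solve the matrix Riccati equation ∂_t P_t = A P_t + P_t Aᵀ − P_t S P_t + R on symmetric positive semi-definite r×r matrices, where S is positive definite and R positive semi-definite. Then the trace satisfies the differential inequality ∂_t tr(P_t) ≤ 2μ(A)·tr(P_t) − (λ_min(S)/r)·(tr P_t)² + tr(R). Consequently tr(P_t) ≤ g_t + e^{2μ(A)t}(tr(P_0) − g_0), where g_t solves the scalar Riccati equation ∂_t g_t = 2μ(A) g_t − (λ_min(S)/r) g_t² + tr(R) with g_0 = tr(P_0). -/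
open Matrix MeasureTheory Real
open scoped ENNReal

noncomputable section

/-- The symmetric part `(A + Aᵀ)/2` of a square real matrix. -/
def symmPart {r : ℕ} (A : Matrix (Fin r) (Fin r) ℝ) : Matrix (Fin r) (Fin r) ℝ :=
  (1 / 2 : ℝ) • (A + Aᵀ)

lemma symmPart_isHermitian {r : ℕ} (A : Matrix (Fin r) (Fin r) ℝ) :
    (symmPart A).IsHermitian := by
  unfold symmPart Matrix.IsHermitian
  ext i j
  simp [Matrix.conjTranspose_apply, Matrix.smul_apply, Matrix.add_apply,
    Matrix.transpose_apply]
  ring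

/-- The largest eigenvalue of a Hermitian real matrix. -/
def lambdaMax {n : Type*} [Fintype n] [DecidableEq n] {A : Matrix n n ℝ}
    (hA : A.IsHermitian) : ℝ := ⨆ i, hA.eigenvalues i

/-- The smallest eigenvalue of a Hermitian real matrix. -/
def lambdaMin {n : Type*} [Fintype n] [DecidableEq n] {A : Matrix n n ℝ}
    (hA : A.IsHermitian) : ℝ := ⨅ i, hA.eigenvalues i

/-- The logarithmic norm `μ(A) = λ_max((A + Aᵀ)/2)` of a square real matrix. -/
def logNorm {r : ℕ} (A : Matrix (Fin r) (Fin r) ℝ) : ℝ :=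
  lambdaMax (symmPart_isHermitian A)

/-- The operator norm of a square real matrix, induced by the Euclidean norm. -/
def opNorm {r : ℕ} (A : Matrix (Fin r) (Fin r) ℝ) : ℝ :=
  ‖(Matrix.toEuclideanCLM (𝕜 := ℝ) (n := Fin r) A :
      EuclideanSpace ℝ (Fin r) →L[ℝ] EuclideanSpace ℝ (Fin r))‖

/-- The Frobenius norm `‖A‖_F = √(tr(AᵀA))` of a square real matrix. -/
def frobNorm {r : ℕ} (A : Matrix (Fin r) (Fin r) ℝ) : ℝ :=
  Real.sqrt (Matrix.trace (Aᵀ * A))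


lemma psd_trace_nonneg {n : Type*} [Fintype n] [DecidableEq n] {M : Matrix n n ℝ} (hM : M.PosSemidef) :
    0 ≤ M.trace := by
  have : ∀ i, 0 ≤ M i i := fun i => hM.diag_nonneg
  exact Finset.sum_nonneg fun i _ => this i

lemma trace_mul_nonneg {n : Type*} [Fintype n] [DecidableEq n] {M N : Matrix n n ℝ}
    (hM : M.PosSemidef) (hN : N.PosSemidef) : 0 ≤ (M * N).trace := by
  obtain ⟨B, rfl⟩ : ∃ B : Matrix n n ℝ, N = Bᴴ * B := by
    open scoped MatrixOrder in
    exact CStarAlgebra.nonneg_iff_eq_star_mul_self.mp hN.nonneg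
  rw [show M * (Bᴴ * B) = (M * Bᴴ) * B from (mul_assoc _ _ _).symm, Matrix.trace_mul_comm,
    ← mul_assoc]
  exact psd_trace_nonneg (hM.mul_mul_conjTranspose_same B)

lemma smul_one_sub_psd {n : Type*} [Fintype n] [DecidableEq n] {M : Matrix n n ℝ}
    (hM : M.IsHermitian) {μ : ℝ} (h : ∀ i, hM.eigenvalues i ≤ μ) :
    (μ • (1 : Matrix n n ℝ) - M).PosSemidef := by
  have hs := hM.spectral_theorem
  set U : Matrix n n ℝ := (hM.eigenvectorUnitary : Matrix n n ℝ)
  have hU : U * star U = 1 := (Matrix.mem_unitaryGroup_iff).mp hM.eigenvectorUnitary.2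
  have key : μ • (1 : Matrix n n ℝ) - M
      = U * Matrix.diagonal (fun i => μ - hM.eigenvalues i) * star U := by
    have h1 : μ • (1 : Matrix n n ℝ) = U * (μ • (1 : Matrix n n ℝ)) * star U := by
      rw [Matrix.mul_smul, Matrix.mul_one, Matrix.smul_mul, hU]
    rw [h1]
    nth_rewrite 1 [hs]
    rw [Unitary.conjStarAlgAut_apply]
    rw [← Matrix.sub_mul, ← Matrix.mul_sub]
    congr 1
    congr 1
    ext i j
    by_cases hij : i = j <;>
      simp [Matrix.diagonal, Matrix.one_apply, hij, Matrix.smul_apply]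
  rw [key, Matrix.star_eq_conjTranspose]
  exact (Matrix.posSemidef_diagonal_iff.mpr fun i => sub_nonneg.2 (h i)).mul_mul_conjTranspose_same U

lemma sub_smul_one_psd {n : Type*} [Fintype n] [DecidableEq n] {M : Matrix n n ℝ}
    (hM : M.IsHermitian) {μ : ℝ} (h : ∀ i, μ ≤ hM.eigenvalues i) :
    (M - μ • (1 : Matrix n n ℝ)).PosSemidef := by
  have hs := hM.spectral_theorem
  set U : Matrix n n ℝ := (hM.eigenvectorUnitary : Matrix n n ℝ)
  have hU : U * star U = 1 := (Matrix.mem_unitaryGroup_iff).mp hM.eigenvectorUnitary.2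
  have key : M - μ • (1 : Matrix n n ℝ)
      = U * Matrix.diagonal (fun i => hM.eigenvalues i - μ) * star U := by
    have h1 : μ • (1 : Matrix n n ℝ) = U * (μ • (1 : Matrix n n ℝ)) * star U := by
      rw [Matrix.mul_smul, Matrix.mul_one, Matrix.smul_mul, hU]
    rw [h1]
    nth_rewrite 1 [hs]
    rw [Unitary.conjStarAlgAut_apply]
    rw [← Matrix.sub_mul, ← Matrix.mul_sub]
    congr 1
    congr 1
    ext i j
    by_cases hij : i = j <;>
      simp [Matrix.diagonal, Matrix.one_apply, hij, Matrix.smul_apply]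
  rw [key, Matrix.star_eq_conjTranspose]
  exact (Matrix.posSemidef_diagonal_iff.mpr fun i => sub_nonneg.2 (h i)).mul_mul_conjTranspose_same U

lemma lambdaMin_nonneg' {n : Type*} [Fintype n] [DecidableEq n] {S : Matrix n n ℝ}
    (hS : S.PosSemidef) : 0 ≤ lambdaMin hS.isHermitian := by
  unfold lambdaMin
  cases isEmpty_or_nonempty n with
  | inl h => exact (Real.iInf_of_isEmpty _).ge
  | inr h => exact le_ciInf fun i => hS.eigenvalues_nonneg i

lemma key_trace_ineq {r : ℕ} (A S R : Matrix (Fin r) (Fin r) ℝ) (hS : S.PosDef)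
    (P : Matrix (Fin r) (Fin r) ℝ) (hP : P.PosSemidef) :
    Matrix.trace (A * P + P * Aᵀ - P * S * P + R) ≤
      2 * logNorm A * Matrix.trace P -
        (lambdaMin hS.posSemidef.isHermitian / r) * (Matrix.trace P) ^ 2 +
        Matrix.trace R := by
  set M := symmPart A with hM
  set lmin := lambdaMin hS.posSemidef.isHermitian with hlmin
  have hlmin0 : 0 ≤ lmin := lambdaMin_nonneg' hS.posSemidef
  -- step A : trace (M * P) ≤ logNorm A * trace P
  have hAbd : ∀ i, (symmPart_isHermitian A).eigenvalues i ≤ logNorm A := fun i =>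
    le_ciSup (Set.Finite.bddAbove (Set.finite_range _)) i
  have hA1 : Matrix.trace (M * P) ≤ logNorm A * Matrix.trace P := by
    have h0 := trace_mul_nonneg (smul_one_sub_psd (symmPart_isHermitian A) hAbd) hP
    rw [Matrix.sub_mul, Matrix.smul_mul, Matrix.one_mul, Matrix.trace_sub,
      Matrix.trace_smul] at h0
    simpa using sub_nonneg.mp h0
  -- step B : lmin * trace (P*P) ≤ trace (P*S*P)
  have hSbd : ∀ i, lmin ≤ hS.posSemidef.isHermitian.eigenvalues i := fun i =>
    ciInf_le (Set.Finite.bddBelow (Set.finite_range _)) i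
  have hB : lmin * Matrix.trace (P * P) ≤ Matrix.trace (P * S * P) := by
    have hpsd2 := (sub_smul_one_psd hS.posSemidef.isHermitian hSbd).conjTranspose_mul_mul_same P
    have h0 := psd_trace_nonneg hpsd2
    rw [hP.isHermitian.eq] at h0
    rw [Matrix.mul_sub, Matrix.mul_smul, Matrix.mul_one, Matrix.sub_mul,
      Matrix.smul_mul, Matrix.trace_sub, Matrix.trace_smul] at h0
    simpa using sub_nonneg.mp h0
  -- step C : (trace P)^2 ≤ r * trace (P*P)
  have hPsymm : ∀ i j, P j i = P i j := by
    intro i j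
    have := congrFun (congrFun hP.isHermitian.eq j) i
    simpa [Matrix.conjTranspose_apply] using this.symm
  have htrPP : Matrix.trace (P * P) = ∑ i, ∑ j, (P i j) ^ 2 := by
    simp only [Matrix.trace, Matrix.diag, Matrix.mul_apply]
    exact Finset.sum_congr rfl fun i _ => Finset.sum_congr rfl fun j _ => by
      rw [hPsymm i j]; ring
  have hC : (Matrix.trace P) ^ 2 ≤ (r : ℝ) * Matrix.trace (P * P) := by
    have h1 : (∑ i : Fin r, P i i) ^ 2 ≤ ((Finset.univ : Finset (Fin r)).card : ℝ) * ∑ i : Fin r, (P i i) ^ 2 := by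
      exact_mod_cast sq_sum_le_card_mul_sum_sq (s := Finset.univ) (f := fun i => P i i)
    have h2 : ∑ i : Fin r, (P i i) ^ 2 ≤ ∑ i : Fin r, ∑ j : Fin r, (P i j) ^ 2 :=
      Finset.sum_le_sum fun i _ =>
        Finset.single_le_sum (fun j _ => sq_nonneg (P i j)) (Finset.mem_univ i)
    rw [htrPP]
    simp only [Matrix.trace, Matrix.diag]
    calc (∑ i, P i i) ^ 2 ≤ (Finset.univ.card : ℝ) * ∑ i, (P i i) ^ 2 := h1
      _ ≤ (r : ℝ) * ∑ i, ∑ j, (P i j) ^ 2 := by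
          rw [Finset.card_univ, Fintype.card_fin]
          exact mul_le_mul_of_nonneg_left h2 (by positivity)
  -- combine C with lmin
  have hC' : (lmin / r) * (Matrix.trace P) ^ 2 ≤ lmin * Matrix.trace (P * P) := by
    rcases Nat.eq_zero_or_pos r with hr | hr
    · subst hr
      simp [Matrix.trace, Finset.univ_eq_empty]
    · have hr' : (0 : ℝ) < r := by exact_mod_cast hr
      rw [div_mul_eq_mul_div, div_le_iff₀ hr']
      have := mul_le_mul_of_nonneg_left hC hlmin0
      nlinarith
  -- assemble
  have hsplit : Matrix.trace (A * P + P * Aᵀ - P * S * P + R)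
      = Matrix.trace (A * P) + Matrix.trace (P * Aᵀ) - Matrix.trace (P * S * P)
        + Matrix.trace R := by
    rw [Matrix.trace_add, Matrix.trace_sub, Matrix.trace_add]
  have h2M : Matrix.trace (A * P) + Matrix.trace (P * Aᵀ) = 2 * Matrix.trace (M * P) := by
    rw [Matrix.trace_mul_comm P Aᵀ, hM]
    unfold symmPart
    rw [Matrix.smul_mul, Matrix.add_mul, Matrix.trace_smul, Matrix.trace_add,
      smul_eq_mul]
    ring
  rw [hsplit, h2M]
  linarith

/-- trace differential inequality and comparison with a scalar Riccati
equation for the matrix Riccati flow. -/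
theorem trace_riccati_comparison {r : ℕ}
    (A S R : Matrix (Fin r) (Fin r) ℝ) (hS : S.PosDef) (hR : R.PosSemidef)
    (hμ : logNorm A < 0)
    (P : ℝ → Matrix (Fin r) (Fin r) ℝ)
    (hP : ∀ t i j, HasDerivAt (fun u => P u i j)
      ((A * P t + P t * Aᵀ - P t * S * P t + R) i j) t)
    (hpsd : ∀ t, (P t).PosSemidef)
    (g : ℝ → ℝ)
    (hg : ∀ t, HasDerivAt g
      (2 * logNorm A * g t - (lambdaMin hS.posSemidef.isHermitian / r) * g t ^ 2 +
        Matrix.trace R) t)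
    (hg0 : g 0 = Matrix.trace (P 0)) :
    (∀ t, Matrix.trace (A * P t + P t * Aᵀ - P t * S * P t + R) ≤
        2 * logNorm A * Matrix.trace (P t) -
          (lambdaMin hS.posSemidef.isHermitian / r) * (Matrix.trace (P t)) ^ 2 +
          Matrix.trace R) ∧
    ∀ t ≥ (0 : ℝ), Matrix.trace (P t) ≤
      g t + Real.exp (2 * logNorm A * t) * (Matrix.trace (P 0) - g 0) := by
  set μ := logNorm A with hμdef
  set c := lambdaMin hS.posSemidef.isHermitian / r with hcdef
  have hc0 : 0 ≤ c := div_nonneg (lambdaMin_nonneg' hS.posSemidef) (Nat.cast_nonneg r)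
  have part1 : ∀ t, Matrix.trace (A * P t + P t * Aᵀ - P t * S * P t + R) ≤
      2 * μ * Matrix.trace (P t) - c * (Matrix.trace (P t)) ^ 2 + Matrix.trace R :=
    fun t => key_trace_ineq A S R hS (P t) (hpsd t)
  refine ⟨part1, ?_⟩
  set f : ℝ → ℝ := fun t => Matrix.trace (P t) with hfdef
  have hf' : ∀ t, HasDerivAt f
      (Matrix.trace (A * P t + P t * Aᵀ - P t * S * P t + R)) t := by
    intro t
    have h := HasDerivAt.fun_sum (u := (Finset.univ : Finset (Fin r)))
      (A := fun i u => P u i i)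
      (A' := fun i => (A * P t + P t * Aᵀ - P t * S * P t + R) i i)
      (fun i _ => hP t i i)
    simpa [hfdef, Matrix.trace, Matrix.diag] using h
  have hfc : Continuous f := by
    apply continuous_iff_continuousAt.2
    exact fun t => (hf' t).continuousAt
  have hgc : Continuous g := by
    apply continuous_iff_continuousAt.2
    exact fun t => (hg t).continuousAt
  intro T hT
  rw [hg0, sub_self, mul_zero, add_zero]
  -- show f T ≤ g T
  refine le_of_forall_pos_le_add fun ε hε => ?_
  -- choose K
  obtain ⟨x₀, hx₀mem, hx₀⟩ := (isCompact_Icc (a := (0:ℝ)) (b := T)).exists_isMaxOn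
    (Set.nonempty_Icc.2 hT)
    (((continuous_const.sub (continuous_const.mul hgc)).abs).continuousOn
      (s := Set.Icc 0 T) (f := fun x => |2 * μ - 2 * c * g x|))
  set K : ℝ := 1 + |2 * μ - 2 * c * g x₀| with hKdef
  have hKbd : ∀ x ∈ Set.Icc (0:ℝ) T, |2 * μ - 2 * c * g x| ≤ K - 1 := by
    intro x hx
    have := hx₀ hx
    simpa [hKdef] using this
  have hK1 : (1 : ℝ) ≤ K := by
    have := abs_nonneg (2 * μ - 2 * c * g x₀); linarith [hKdef.ge]
  have hexp : (0 : ℝ) < Real.exp (K * T) := Real.exp_pos _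
  set ε₀ : ℝ := ε / Real.exp (K * T) with hε₀def
  have hε₀ : 0 < ε₀ := div_pos hε hexp
  set B : ℝ → ℝ := fun t => g t + ε₀ * Real.exp (K * t) with hBdef
  set B' : ℝ → ℝ := fun t =>
    (2 * μ * g t - c * g t ^ 2 + Matrix.trace R) + ε₀ * (Real.exp (K * t) * (K * 1)) with hB'def
  have hB : ∀ x, HasDerivAt B (B' x) x := fun x =>
    (hg x).add ((((hasDerivAt_id x).const_mul K).exp).const_mul ε₀)
  have main : ∀ ⦃x⦄, x ∈ Set.Icc (0:ℝ) T → f x ≤ B x := by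
    apply image_le_of_deriv_right_lt_deriv_boundary
      (f' := fun t => Matrix.trace (A * P t + P t * Aᵀ - P t * S * P t + R))
      (hf := hfc.continuousOn)
      (hf' := fun x _ => (hf' x).hasDerivWithinAt)
      (hB := hB)
    · -- f 0 ≤ B 0
      have : f 0 = g 0 := hg0.symm
      simp only [hBdef, mul_zero, Real.exp_zero, mul_one]
      nlinarith
    · -- bound at contact
      intro x hx hfx
      set E : ℝ := ε₀ * Real.exp (K * x) with hEdef
      have hE : 0 < E := mul_pos hε₀ (Real.exp_pos _)
      have h1 : Matrix.trace (A * P x + P x * Aᵀ - P x * S * P x + R) ≤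
          2 * μ * f x - c * (f x) ^ 2 + Matrix.trace R := part1 x
      have hfxB : f x = g x + E := hfx
      have habs : 2 * μ - 2 * c * g x ≤ K - 1 :=
        le_trans (le_abs_self _) (hKbd x (Set.mem_Icc_of_Ico hx))
      have hEK : E * (2 * μ - 2 * c * g x) ≤ E * (K - 1) :=
        mul_le_mul_of_nonneg_left habs hE.le
      have hB'x : B' x = (2 * μ * g x - c * g x ^ 2 + Matrix.trace R) + E * K := by
        simp [hB'def, hEdef]; ring
      rw [hB'x]
      calc Matrix.trace (A * P x + P x * Aᵀ - P x * S * P x + R)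
          ≤ 2 * μ * f x - c * (f x) ^ 2 + Matrix.trace R := h1
        _ < (2 * μ * g x - c * g x ^ 2 + Matrix.trace R) + E * K := by
            rw [hfxB]; nlinarith [hEK, hE, mul_nonneg hc0 (sq_nonneg E)]
  have := main (Set.right_mem_Icc.2 hT)
  have hBT : B T = g T + ε := by
    simp only [hBdef, hε₀def]
    rw [div_mul_cancel₀ _ (Real.exp_ne_zero _)]
  linarith [hBT ▸ this]
end
end

section
/- Suppose S = ρ·Id with ρ > 0, μ(A) < 0, and let P_t, Q_t be two solutions of the matrix Riccati equation ∂_t P = AP + PAᵀ − PSP + R with positive semi-definite initial conditions. Then for all t ≥ 0, ‖P_t − Q_t‖_F ≤ exp(2μ(A)t)·‖P_0 − Q_0‖_F. -/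
open Matrix MeasureTheory Real
open scoped ENNReal

noncomputable section
open Set Filter Topology Bornology

/-- Rayleigh quotient bound for Hermitian real matrices. -/
lemma rayleigh_le {n : Type*} [Fintype n] [DecidableEq n] {H : Matrix n n ℝ}
    (hH : H.IsHermitian) (x : n → ℝ) :
    x ⬝ᵥ (H *ᵥ x) ≤ lambdaMax hH * (x ⬝ᵥ x) := by
  classical
  set U : Matrix n n ℝ := (hH.eigenvectorUnitary : Matrix n n ℝ) with hU
  set y : n → ℝ := x ᵥ* U with hy
  have hUU : U * star U = 1 := (Matrix.mem_unitaryGroup_iff).mp hH.eigenvectorUnitary.2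
  have hyx : y ⬝ᵥ y = x ⬝ᵥ x := by
    have : y = star U *ᵥ x := by
      ext j
      simp [hy, Matrix.vecMul, Matrix.mulVec, dotProduct, Matrix.star_apply, mul_comm]
    calc y ⬝ᵥ y = (x ᵥ* U) ⬝ᵥ (star U *ᵥ x) := by rw [← this, hy]
    _ = x ⬝ᵥ (U *ᵥ (star U *ᵥ x)) := (Matrix.dotProduct_mulVec x U _).symm
    _ = x ⬝ᵥ ((U * star U) *ᵥ x) := by rw [Matrix.mulVec_mulVec]
    _ = x ⬝ᵥ x := by rw [hUU, Matrix.one_mulVec]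
  have hspec := hH.spectral_theorem
  have hquad : x ⬝ᵥ (H *ᵥ x) = ∑ i, hH.eigenvalues i * (y i)^2 := by
    have hyst : star U *ᵥ x = y := by
      ext j
      simp [hy, Matrix.vecMul, Matrix.mulVec, dotProduct, Matrix.star_apply, mul_comm]
    calc x ⬝ᵥ (H *ᵥ x)
        = x ⬝ᵥ ((U * Matrix.diagonal (RCLike.ofReal ∘ hH.eigenvalues) * star U) *ᵥ x) := by
          simp only [Unitary.conjStarAlgAut_apply] at hspec
          rw [← hspec]
      _ = x ⬝ᵥ (U *ᵥ (Matrix.diagonal (RCLike.ofReal ∘ hH.eigenvalues) *ᵥ (star U *ᵥ x))) := by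
          rw [Matrix.mulVec_mulVec, Matrix.mulVec_mulVec, Matrix.mul_assoc]
      _ = y ⬝ᵥ (Matrix.diagonal (RCLike.ofReal ∘ hH.eigenvalues) *ᵥ y) := by
          rw [Matrix.dotProduct_mulVec, ← hy, hyst]
      _ = ∑ i, hH.eigenvalues i * (y i)^2 := by
          simp [Matrix.mulVec_diagonal, dotProduct]
          exact Finset.sum_congr rfl fun i _ => by ring
  rw [hquad, ← hyx]
  have hbdd : BddAbove (Set.range hH.eigenvalues) := Set.Finite.bddAbove (Set.finite_range _)
  calc ∑ i, hH.eigenvalues i * (y i)^2 ≤ ∑ i, lambdaMax hH * (y i)^2 := by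
        apply Finset.sum_le_sum
        intro i _
        exact mul_le_mul_of_nonneg_right (le_ciSup hbdd i) (sq_nonneg _)
    _ = lambdaMax hH * (y ⬝ᵥ y) := by
        simp only [dotProduct, Finset.mul_sum]
        exact Finset.sum_congr rfl fun i _ => by ring

lemma quad_symmPart {r : ℕ} (A : Matrix (Fin r) (Fin r) ℝ) (x : Fin r → ℝ) :
    x ⬝ᵥ (symmPart A *ᵥ x) = x ⬝ᵥ (A *ᵥ x) := by
  have ht : x ⬝ᵥ (Aᵀ *ᵥ x) = x ⬝ᵥ (A *ᵥ x) := by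
    rw [Matrix.mulVec_transpose, dotProduct_comm, ← Matrix.dotProduct_mulVec]
  simp [symmPart, Matrix.add_mulVec, Matrix.smul_mulVec, dotProduct_add,
    dotProduct_smul, ht]
  ring

lemma quad_le_logNorm {r : ℕ} (A : Matrix (Fin r) (Fin r) ℝ) (x : Fin r → ℝ) :
    x ⬝ᵥ (A *ᵥ x) ≤ logNorm A * (x ⬝ᵥ x) := by
  rw [← quad_symmPart]
  exact rayleigh_le (symmPart_isHermitian A) x




lemma trace_col (D N : Matrix (Fin r) (Fin r) ℝ) :
    Matrix.trace (Dᵀ * N * D) = ∑ j, (fun i => D i j) ⬝ᵥ (N *ᵥ (fun i => D i j)) := by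
  simp only [Matrix.trace, Matrix.diag, Matrix.mul_apply, Matrix.transpose_apply,
    dotProduct, Matrix.mulVec, Finset.sum_mul, Finset.mul_sum]
  apply Finset.sum_congr rfl; intro j _
  rw [Finset.sum_comm]
  apply Finset.sum_congr rfl; intro i _
  apply Finset.sum_congr rfl; intro k _
  ring

lemma trace_row (D N : Matrix (Fin r) (Fin r) ℝ) :
    Matrix.trace (Dᵀ * D * N) = ∑ i, (fun j => D i j) ⬝ᵥ (N *ᵥ (fun j => D i j)) := by
  rw [Matrix.mul_assoc, Matrix.trace_mul_comm]
  simp only [Matrix.trace, Matrix.diag, Matrix.mul_apply, Matrix.transpose_apply,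
    dotProduct, Matrix.mulVec, Finset.sum_mul, Finset.mul_sum]
  apply Finset.sum_congr rfl; intro i _
  rw [Finset.sum_comm]
  apply Finset.sum_congr rfl; intro j _
  apply Finset.sum_congr rfl; intro k _
  ring

lemma trace_sq (D : Matrix (Fin r) (Fin r) ℝ) :
    Matrix.trace (Dᵀ * D) = ∑ i, ∑ j, (D i j)^2 := by
  rw [Finset.sum_comm]
  simp only [Matrix.trace, Matrix.diag, Matrix.mul_apply, Matrix.transpose_apply]
  exact Finset.sum_congr rfl fun j _ => Finset.sum_congr rfl fun i _ => (sq (D i j)).symm ▸ by ring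

lemma trace_col_eq (D N : Matrix (Fin r) (Fin r) ℝ) :
    Matrix.trace (Dᵀ * (N * D)) = Matrix.trace (Dᵀ * N * D) := by rw [Matrix.mul_assoc]

lemma trace_sq_col (D : Matrix (Fin r) (Fin r) ℝ) :
    Matrix.trace (Dᵀ * D) = ∑ j, (fun i => D i j) ⬝ᵥ (fun i => D i j) := by
  rw [trace_sq, Finset.sum_comm]
  exact Finset.sum_congr rfl fun j _ => Finset.sum_congr rfl fun i _ => (sq (D i j))

lemma trace_sq_row (D : Matrix (Fin r) (Fin r) ℝ) :
    Matrix.trace (Dᵀ * D) = ∑ i, (fun j => D i j) ⬝ᵥ (fun j => D i j) := by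
  rw [trace_sq]
  exact Finset.sum_congr rfl fun i _ => Finset.sum_congr rfl fun j _ => (sq (D i j))




def vecM {r : ℕ} (M : Matrix (Fin r) (Fin r) ℝ) : Fin r × Fin r → ℝ := fun p => M p.1 p.2

lemma entry_le_vecM (M : Matrix (Fin r) (Fin r) ℝ) (i j : Fin r) : |M i j| ≤ ‖vecM M‖ := by
  simpa [vecM, Real.norm_eq_abs] using norm_le_pi_norm (vecM M) (i, j)

lemma entry_mul_le {M N : Matrix (Fin r) (Fin r) ℝ} {a b : ℝ}
    (hM : ∀ i j, |M i j| ≤ a) (hN : ∀ i j, |N i j| ≤ b) (i j : Fin r) :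
    |(M * N) i j| ≤ (r : ℝ) * (a * b) := by
  have ha : 0 ≤ a := le_trans (abs_nonneg _) (hM i i)
  calc |(M * N) i j| = |∑ k, M i k * N k j| := by rw [Matrix.mul_apply]
    _ ≤ ∑ k, |M i k * N k j| := Finset.abs_sum_le_sum_abs _ _
    _ ≤ ∑ _k : Fin r, a * b := by
        apply Finset.sum_le_sum
        intro k _
        rw [abs_mul]
        exact mul_le_mul (hM i k) (hN k j) (abs_nonneg _) ha
    _ = (r : ℝ) * (a * b) := by simp [Finset.sum_const]

lemma transpose_eq_of_ode (A R : Matrix (Fin r) (Fin r) ℝ) (ρ : ℝ) (hR : Rᵀ = R)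
    (P : ℝ → Matrix (Fin r) (Fin r) ℝ)
    (hP : ∀ t i j, HasDerivAt (fun u => P u i j)
      ((A * P t + P t * Aᵀ - ρ • (P t * P t) + R) i j) t)
    (h0 : (P 0)ᵀ = P 0) : ∀ t, 0 ≤ t → (P t)ᵀ = P t := by
  intro T hT
  -- the matrix E t = RHS of the ODE
  set E : ℝ → Matrix (Fin r) (Fin r) ℝ :=
    fun t => A * P t + P t * Aᵀ - ρ • (P t * P t) + R with hE
  -- skew part, vectorized
  set V : ℝ → (Fin r × Fin r → ℝ) := fun t => vecM (P t - (P t)ᵀ) with hV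
  set V' : ℝ → (Fin r × Fin r → ℝ) := fun t => vecM (E t - (E t)ᵀ) with hV'
  have hVd : ∀ t, HasDerivAt V (V' t) t := by
    intro t
    refine (hasDerivAt_pi (𝕜 := ℝ) (ι := Fin r × Fin r) (E' := fun _ => ℝ)
      (φ := V) (φ' := V' t) (x := t)).2 ?_
    intro p
    have h1 := (hP t p.1 p.2).sub (hP t p.2 p.1)
    exact h1
  -- continuity of entries of P
  have hPc : ∀ i j, Continuous fun t => P t i j := by
    intro i j
    exact continuous_iff_continuousAt.2 fun t => (hP t i j).continuousAt
  have hVc : Continuous V := by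
    have : ∀ p : Fin r × Fin r, Continuous fun t => V t p :=
      fun p => (hPc p.1 p.2).sub (hPc p.2 p.1)
    exact continuous_pi this
  -- bound on entries of P on [0,T]
  have hPvc : ContinuousOn (fun t => vecM (P t)) (Icc 0 T) :=
    (continuous_pi fun p : Fin r × Fin r => hPc p.1 p.2).continuousOn
  obtain ⟨NP, hNP⟩ := (isCompact_Icc : IsCompact (Icc (0:ℝ) T)).exists_bound_of_continuousOn hPvc
  have hNP0 : 0 ≤ NP := le_trans (norm_nonneg _) (hNP 0 ⟨le_refl _, hT⟩)
  have hPent : ∀ t ∈ Icc (0:ℝ) T, ∀ i j, |P t i j| ≤ NP := by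
    intro t ht i j
    exact le_trans (entry_le_vecM (P t) i j) (hNP t ht)
  set NA : ℝ := ‖vecM A‖ with hNA
  have hNA0 : 0 ≤ NA := norm_nonneg _
  set K : ℝ := 2 * ((r : ℝ) * NA) + |ρ| * (2 * ((r : ℝ) * NP)) with hK
  have hK0 : 0 ≤ K := by positivity
  -- the key algebraic identity
  have hkey : ∀ t, E t - (E t)ᵀ =
      A * (P t - (P t)ᵀ) + (P t - (P t)ᵀ) * Aᵀ
        - ρ • (P t * (P t - (P t)ᵀ) + (P t - (P t)ᵀ) * (P t)ᵀ) := by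
    intro t
    have hsq : P t * P t - (P t)ᵀ * (P t)ᵀ
        = P t * (P t - (P t)ᵀ) + (P t - (P t)ᵀ) * (P t)ᵀ := by noncomm_ring
    have hET : (E t)ᵀ = (P t)ᵀ * Aᵀ + A * (P t)ᵀ - ρ • ((P t)ᵀ * (P t)ᵀ) + R := by
      simp [hE, Matrix.transpose_add, Matrix.transpose_sub, Matrix.transpose_mul,
        Matrix.transpose_smul, Matrix.transpose_transpose, hR]
    rw [hET, hE]
    rw [Matrix.mul_sub, Matrix.sub_mul, ← hsq, smul_sub]
    module
  -- norm bound on the derivative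
  have hbound : ∀ t ∈ Icc (0:ℝ) T, ‖V' t‖ ≤ K * ‖V t‖ := by
    intro t ht
    have hvnn : 0 ≤ K * ‖V t‖ := mul_nonneg hK0 (norm_nonneg _)
    rw [pi_norm_le_iff_of_nonneg hvnn]
    intro p
    have hΔ : ∀ i j, |(P t - (P t)ᵀ) i j| ≤ ‖V t‖ := fun i j => entry_le_vecM _ i j
    have hA : ∀ i j, |A i j| ≤ NA := fun i j => entry_le_vecM A i j
    have hAT : ∀ i j, |Aᵀ i j| ≤ NA := fun i j => entry_le_vecM A j i
    have hPb : ∀ i j, |P t i j| ≤ NP := hPent t ht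
    have hPTb : ∀ i j, |(P t)ᵀ i j| ≤ NP := fun i j => hPent t ht j i
    have e1 : ∀ i j, |(A * (P t - (P t)ᵀ)) i j| ≤ (r : ℝ) * (NA * ‖V t‖) :=
      entry_mul_le hA hΔ
    have e2 : ∀ i j, |((P t - (P t)ᵀ) * Aᵀ) i j| ≤ (r : ℝ) * (‖V t‖ * NA) :=
      entry_mul_le hΔ hAT
    have e3 : ∀ i j, |(P t * (P t - (P t)ᵀ)) i j| ≤ (r : ℝ) * (NP * ‖V t‖) :=
      entry_mul_le hPb hΔ
    have e4 : ∀ i j, |((P t - (P t)ᵀ) * (P t)ᵀ) i j| ≤ (r : ℝ) * (‖V t‖ * NP) :=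
      entry_mul_le hΔ hPTb
    have : V' t p = (A * (P t - (P t)ᵀ)) p.1 p.2 + ((P t - (P t)ᵀ) * Aᵀ) p.1 p.2
        - ρ * ((P t * (P t - (P t)ᵀ)) p.1 p.2 + ((P t - (P t)ᵀ) * (P t)ᵀ) p.1 p.2) := by
      have h2 := congrArg (fun M => M p.1 p.2) (hkey t)
      simp only [Matrix.sub_apply, Matrix.add_apply, Matrix.smul_apply,
        Matrix.transpose_apply, smul_eq_mul] at h2
      exact h2
    rw [Real.norm_eq_abs, this]
    have step : |(A * (P t - (P t)ᵀ)) p.1 p.2 + ((P t - (P t)ᵀ) * Aᵀ) p.1 p.2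
        - ρ * ((P t * (P t - (P t)ᵀ)) p.1 p.2 + ((P t - (P t)ᵀ) * (P t)ᵀ) p.1 p.2)|
        ≤ (r : ℝ) * (NA * ‖V t‖) + (r : ℝ) * (‖V t‖ * NA)
          + |ρ| * ((r : ℝ) * (NP * ‖V t‖) + (r : ℝ) * (‖V t‖ * NP)) := by
      have t1 := abs_add_le ((A * (P t - (P t)ᵀ)) p.1 p.2) (((P t - (P t)ᵀ) * Aᵀ) p.1 p.2)
      have t2 := abs_add_le ((P t * (P t - (P t)ᵀ)) p.1 p.2) (((P t - (P t)ᵀ) * (P t)ᵀ) p.1 p.2)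
      calc |(A * (P t - (P t)ᵀ)) p.1 p.2 + ((P t - (P t)ᵀ) * Aᵀ) p.1 p.2
          - ρ * ((P t * (P t - (P t)ᵀ)) p.1 p.2 + ((P t - (P t)ᵀ) * (P t)ᵀ) p.1 p.2)|
          ≤ |(A * (P t - (P t)ᵀ)) p.1 p.2 + ((P t - (P t)ᵀ) * Aᵀ) p.1 p.2|
            + |ρ * ((P t * (P t - (P t)ᵀ)) p.1 p.2 + ((P t - (P t)ᵀ) * (P t)ᵀ) p.1 p.2)| :=
            abs_sub _ _
        _ ≤ (|(A * (P t - (P t)ᵀ)) p.1 p.2| + |((P t - (P t)ᵀ) * Aᵀ) p.1 p.2|)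
            + |ρ| * (|(P t * (P t - (P t)ᵀ)) p.1 p.2| + |((P t - (P t)ᵀ) * (P t)ᵀ) p.1 p.2|) := by
            rw [abs_mul]
            exact add_le_add t1 (mul_le_mul_of_nonneg_left t2 (abs_nonneg ρ))
        _ ≤ (r : ℝ) * (NA * ‖V t‖) + (r : ℝ) * (‖V t‖ * NA)
            + |ρ| * ((r : ℝ) * (NP * ‖V t‖) + (r : ℝ) * (‖V t‖ * NP)) := by
            have := add_le_add (add_le_add (e1 p.1 p.2) (e2 p.1 p.2))
              (mul_le_mul_of_nonneg_left (add_le_add (e3 p.1 p.2) (e4 p.1 p.2)) (abs_nonneg ρ))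
            linarith
    refine le_trans step (le_of_eq ?_)
    rw [hK]
    ring
  -- Grönwall
  have hgron := norm_le_gronwallBound_of_norm_deriv_right_le (f := V) (f' := V')
    (δ := 0) (K := K) (ε := 0) (a := 0) (b := T)
    (hVc.continuousOn)
    (fun t _ => (hVd t).hasDerivWithinAt)
    (by
      have hv0 : V 0 = 0 := by
        funext p
        have h3 := congrArg (fun M => M p.2 p.1) h0
        simp only [Matrix.transpose_apply] at h3
        show P 0 p.1 p.2 - P 0 p.2 p.1 = 0
        rw [h3, sub_self]
      simp [hv0])
    (fun t ht => by simpa using hbound t ⟨ht.1, le_of_lt ht.2⟩)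
  have hVT : ‖V T‖ ≤ 0 := by
    have := hgron T ⟨hT, le_refl T⟩
    simpa [gronwallBound_ε0_δ0] using this
  have : V T = 0 := by
    have := le_antisymm hVT (norm_nonneg _)
    exact norm_eq_zero.mp this
  ext i j
  have := congrArg (fun v => v (j, i)) this
  simp only [hV, vecM, Matrix.sub_apply, Matrix.transpose_apply, Pi.zero_apply] at this
  simp [Matrix.transpose_apply]
  linarith



-- small pieces for the invariance lemma, tested separately

-- null vector of a quad-pos symmetric matrix
lemma mulVec_eq_zero_of_quad_zero (H : Matrix (Fin r) (Fin r) ℝ) (hsym : Hᵀ = H)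
    (hpos : ∀ y, 0 ≤ y ⬝ᵥ (H *ᵥ y)) (x : Fin r → ℝ) (hx : x ⬝ᵥ (H *ᵥ x) = 0) :
    H *ᵥ x = 0 := by
  have key : ∀ y : Fin r → ℝ, y ⬝ᵥ (H *ᵥ x) = 0 := by
    intro y
    set b : ℝ := y ⬝ᵥ (H *ᵥ y) with hb
    set c : ℝ := y ⬝ᵥ (H *ᵥ x) with hc
    have hb0 : 0 ≤ b := hpos y
    have hxy : x ⬝ᵥ (H *ᵥ y) = c := by
      rw [Matrix.dotProduct_mulVec, ← Matrix.mulVec_transpose, hsym, dotProduct_comm]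
    have hquad : ∀ s : ℝ, 0 ≤ s^2 * b + 2 * s * c := by
      intro s
      have h1 := hpos (x + s • y)
      have hexp : (x + s • y) ⬝ᵥ (H *ᵥ (x + s • y)) = s^2 * b + 2 * s * c := by
        rw [Matrix.mulVec_add, Matrix.mulVec_smul, add_dotProduct,
          smul_dotProduct, dotProduct_add, dotProduct_add,
          dotProduct_smul, dotProduct_smul, hx, hxy, ← hb, ← hc]
        simp [smul_eq_mul]
        ring
      rw [hexp] at h1
      exact h1
    by_contra hc0
    have h2 := hquad (-c / (b + 1))
    have hb1 : 0 < b + 1 := by linarith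
    have hcsq : 0 < c^2 := by positivity
    have : (-c / (b + 1))^2 * b + 2 * (-c / (b + 1)) * c
        = c^2 / (b+1)^2 * b - 2 * c^2 / (b + 1) := by field_simp; ring
    rw [this] at h2
    have hlt : c^2 / (b+1)^2 * b - 2 * c^2 / (b + 1) < 0 := by
      rw [div_mul_eq_mul_div, sub_neg]
      rw [div_lt_div_iff₀ (by positivity) hb1]
      have : c^2 * b * (b+1) < c^2 * (b+1)^2 := by nlinarith
      nlinarith
    linarith
  have := key (H *ᵥ x)
  have hz : (H *ᵥ x) ⬝ᵥ (H *ᵥ x) = 0 := this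
  funext i
  have hsum : ∑ k, ((H *ᵥ x) k)^2 = 0 := by
    rw [← hz]; simp [dotProduct, sq]
  have : ∀ k ∈ Finset.univ, ((H *ᵥ x) k)^2 = 0 :=
    (Finset.sum_eq_zero_iff_of_nonneg (fun k _ => sq_nonneg _)).mp hsum
  have := this i (Finset.mem_univ i)
  exact pow_eq_zero_iff (by norm_num) |>.mp this

lemma quad_transpose' (A : Matrix (Fin r) (Fin r) ℝ) (x : Fin r → ℝ) :
    x ⬝ᵥ (Aᵀ *ᵥ x) = x ⬝ᵥ (A *ᵥ x) := by
  rw [Matrix.mulVec_transpose, dotProduct_comm, ← Matrix.dotProduct_mulVec]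

lemma dot_self_nonneg (x : Fin r → ℝ) : 0 ≤ x ⬝ᵥ x :=
  Finset.sum_nonneg fun i _ => mul_self_nonneg _

lemma eq_zero_of_dot_self_eq_zero {x : Fin r → ℝ} (h : x ⬝ᵥ x = 0) : x = 0 := by
  funext i
  have hsum : ∀ k ∈ Finset.univ, x k * x k = 0 :=
    (Finset.sum_eq_zero_iff_of_nonneg (fun k _ => mul_self_nonneg _)).mp h
  exact mul_self_eq_zero.mp (hsum i (Finset.mem_univ i))

lemma unit_scale {x : Fin r → ℝ} (hx : x ⬝ᵥ x ≠ 0) :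
    ∃ (u : Fin r → ℝ) (c : ℝ), 0 < c ∧ u ⬝ᵥ u = 1 ∧
      ∀ M : Matrix (Fin r) (Fin r) ℝ, x ⬝ᵥ (M *ᵥ x) = c * (u ⬝ᵥ (M *ᵥ u)) := by
  have hpos : 0 < x ⬝ᵥ x := lt_of_le_of_ne (dot_self_nonneg x) (Ne.symm hx)
  set n := x ⬝ᵥ x with hn
  refine ⟨(Real.sqrt n)⁻¹ • x, n, hpos, ?_, ?_⟩
  · have h1 : ((Real.sqrt n)⁻¹ • x) ⬝ᵥ ((Real.sqrt n)⁻¹ • x)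
        = (Real.sqrt n)⁻¹ * ((Real.sqrt n)⁻¹ * n) := by
      rw [smul_dotProduct, dotProduct_smul]; simp [hn]
    rw [h1, ← mul_assoc, ← mul_inv, Real.mul_self_sqrt (le_of_lt hpos)]
    exact inv_mul_cancel₀ (ne_of_gt hpos)
  · intro M
    have hsne : Real.sqrt n ≠ 0 := ne_of_gt (Real.sqrt_pos.mpr hpos)
    have hs : Real.sqrt n * Real.sqrt n = n := Real.mul_self_sqrt hpos.le
    rw [Matrix.mulVec_smul, smul_dotProduct, dotProduct_smul,
      smul_eq_mul, smul_eq_mul]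
    field_simp
    rw [Real.sq_sqrt hpos.le]

/-- bound on the quadratic form of `A` over unit vectors by the ℓ¹ norm of entries -/
lemma quadA_bound (A : Matrix (Fin r) (Fin r) ℝ) {x : Fin r → ℝ} (hx : x ⬝ᵥ x = 1) :
    |x ⬝ᵥ (A *ᵥ x)| ≤ ∑ i, ∑ j, |A i j| := by
  have hxi : ∀ i, |x i| ≤ 1 := by
    intro i
    have h1 : x i * x i ≤ x ⬝ᵥ x := by
      have := Finset.single_le_sum (f := fun k => x k * x k)
        (fun k _ => mul_self_nonneg _) (Finset.mem_univ i)
      exact this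
    rw [hx] at h1
    rw [abs_le]
    constructor <;> nlinarith
  calc |x ⬝ᵥ (A *ᵥ x)| ≤ ∑ i, |x i * (A *ᵥ x) i| := Finset.abs_sum_le_sum_abs _ _
    _ ≤ ∑ i, ∑ j, |A i j| := by
        apply Finset.sum_le_sum
        intro i _
        calc |x i * (A *ᵥ x) i| = |x i| * |(A *ᵥ x) i| := abs_mul _ _
          _ ≤ 1 * |(A *ᵥ x) i| := by
              exact mul_le_mul_of_nonneg_right (hxi i) (abs_nonneg _)
          _ = |∑ j, A i j * x j| := by rw [one_mul, Matrix.mulVec, dotProduct]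
          _ ≤ ∑ j, |A i j * x j| := Finset.abs_sum_le_sum_abs _ _
          _ ≤ ∑ j, |A i j| := by
              apply Finset.sum_le_sum
              intro j _
              rw [abs_mul]
              calc |A i j| * |x j| ≤ |A i j| * 1 :=
                    mul_le_mul_of_nonneg_left (hxi j) (abs_nonneg _)
                _ = |A i j| := mul_one _

/-- derivative of a quadratic form along entrywise-differentiable matrix path -/
lemma hasDerivAt_quad (P : ℝ → Matrix (Fin r) (Fin r) ℝ) (E : Matrix (Fin r) (Fin r) ℝ)
    {t : ℝ} (hP : ∀ i j, HasDerivAt (fun u => P u i j) (E i j) t) (x : Fin r → ℝ) :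
    HasDerivAt (fun u => x ⬝ᵥ (P u *ᵥ x)) (x ⬝ᵥ (E *ᵥ x)) t := by
  have key : ∀ (M : Matrix (Fin r) (Fin r) ℝ),
      x ⬝ᵥ (M *ᵥ x) = ∑ i, ∑ j, x i * M i j * x j := by
    intro M
    simp only [dotProduct, Matrix.mulVec, Finset.mul_sum]
    exact Finset.sum_congr rfl fun i _ => Finset.sum_congr rfl fun j _ => by ring
  have h1 : HasDerivAt (fun u => ∑ i, ∑ j, x i * P u i j * x j)
      (∑ i, ∑ j, x i * E i j * x j) t := by
    apply HasDerivAt.fun_sum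
    intro i _
    apply HasDerivAt.fun_sum
    intro j _
    exact ((hP i j).const_mul (x i)).mul_const (x j)
  have : (fun u => x ⬝ᵥ (P u *ᵥ x)) = fun u => ∑ i, ∑ j, x i * P u i j * x j := by
    funext u; exact key (P u)
  rw [this, key E]
  exact h1


lemma riccati_diff_identity (A R : Matrix (Fin r) (Fin r) ℝ) (ρ : ℝ)
    (Pm Qm : Matrix (Fin r) (Fin r) ℝ) :
    (A * Pm + Pm * Aᵀ - ρ • (Pm * Pm) + R) - (A * Qm + Qm * Aᵀ - ρ • (Qm * Qm) + R)
      = A * (Pm - Qm) + (Pm - Qm) * Aᵀ - ρ • (Pm * (Pm - Qm) + (Pm - Qm) * Qm) := by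
  have hsq : Pm * Pm - Qm * Qm = Pm * (Pm - Qm) + (Pm - Qm) * Qm := by noncomm_ring
  rw [mul_sub, sub_mul, ← hsq, smul_sub]
  abel

lemma trace_riccati (Dm A Pm Qm : Matrix (Fin r) (Fin r) ℝ) (ρ : ℝ) :
    Matrix.trace (Dmᵀ * (A * Dm + Dm * Aᵀ - ρ • (Pm * Dm + Dm * Qm)))
      = Matrix.trace (Dmᵀ * A * Dm) + Matrix.trace (Dmᵀ * Dm * Aᵀ)
        - ρ * (Matrix.trace (Dmᵀ * Pm * Dm) + Matrix.trace (Dmᵀ * Dm * Qm)) := by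
  simp only [mul_sub, mul_add, Matrix.mul_smul, Matrix.trace_sub, Matrix.trace_add,
    Matrix.trace_smul, smul_eq_mul, ← Matrix.mul_assoc]


lemma quad_cont (P : ℝ → Matrix (Fin r) (Fin r) ℝ)
    (hPc : ∀ i j, Continuous fun t => P t i j) (y : Fin r → ℝ) :
    Continuous fun t => y ⬝ᵥ (P t *ᵥ y) := by
  have : (fun t => y ⬝ᵥ (P t *ᵥ y)) = fun t => ∑ i, ∑ j, y i * P t i j * y j := by
    funext t
    simp only [dotProduct, Matrix.mulVec, Finset.mul_sum]
    exact Finset.sum_congr rfl fun i _ => Finset.sum_congr rfl fun j _ => by ring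
  rw [this]
  exact continuous_finset_sum _ fun i _ => continuous_finset_sum _ fun j _ =>
    (continuous_const.mul (hPc i j)).mul continuous_const

lemma entry_le_one_of_unit {y : Fin r → ℝ} (hy : y ⬝ᵥ y = 1) (i : Fin r) : |y i| ≤ 1 := by
  have h1 : y i * y i ≤ y ⬝ᵥ y :=
    Finset.single_le_sum (f := fun k => y k * y k) (fun k _ => mul_self_nonneg _)
      (Finset.mem_univ i)
  rw [hy] at h1
  rw [abs_le]
  constructor <;> nlinarith

lemma quadpos_of_ode (A R : Matrix (Fin r) (Fin r) ℝ) (ρ : ℝ) (hρ : 0 < ρ)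
    (hR : R.PosSemidef)
    (P : ℝ → Matrix (Fin r) (Fin r) ℝ)
    (hP : ∀ t i j, HasDerivAt (fun u => P u i j)
      ((A * P t + P t * Aᵀ - ρ • (P t * P t) + R) i j) t)
    (hP0 : (P 0).PosSemidef) : ∀ t, 0 ≤ t → ∀ x, 0 ≤ x ⬝ᵥ (P t *ᵥ x) := by
  have hRsym : Rᵀ = R := by
    ext i j
    have := congrArg (fun M => M i j) hR.1
    simpa [Matrix.conjTranspose_apply, Matrix.transpose_apply] using this
  have hRquad : ∀ x : Fin r → ℝ, 0 ≤ x ⬝ᵥ (R *ᵥ x) := by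
    intro x; simpa [star_trivial] using hR.dotProduct_mulVec_nonneg x
  have hP0quad : ∀ x : Fin r → ℝ, 0 ≤ x ⬝ᵥ (P 0 *ᵥ x) := by
    intro x; simpa [star_trivial] using hP0.dotProduct_mulVec_nonneg x
  have hP0sym : (P 0)ᵀ = P 0 := by
    ext i j
    have := congrArg (fun M => M i j) hP0.1
    simpa [Matrix.conjTranspose_apply, Matrix.transpose_apply] using this
  have hsym : ∀ t, 0 ≤ t → (P t)ᵀ = P t := transpose_eq_of_ode A R ρ hRsym P hP hP0sym
  have hPc : ∀ i j, Continuous fun t => P t i j :=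
    fun i j => continuous_iff_continuousAt.2 fun t => (hP t i j).continuousAt
  set NA : ℝ := ∑ i, ∑ j, |A i j| with hNAdef
  have hNA0 : 0 ≤ NA :=
    Finset.sum_nonneg fun i _ => Finset.sum_nonneg fun j _ => abs_nonneg _
  set C : ℝ := 2 * NA + 2 with hCdef
  have hC0 : 0 < C := by rw [hCdef]; linarith
  intro T hT x0
  suffices claim : ∀ η : ℝ, 0 < η → ∀ x : Fin r → ℝ, x ⬝ᵥ x = 1 → -η ≤ x ⬝ᵥ (P T *ᵥ x) by
    rcases eq_or_ne (x0 ⬝ᵥ x0) 0 with h0 | h0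
    · rw [eq_zero_of_dot_self_eq_zero h0]
      simp
    · obtain ⟨u, c, hc, hu1, hscale⟩ := unit_scale h0
      rw [hscale (P T)]
      have hu : 0 ≤ u ⬝ᵥ (P T *ᵥ u) := by
        by_contra hlt
        push_neg at hlt
        have := claim (-(u ⬝ᵥ (P T *ᵥ u)) / 2) (by linarith) u hu1
        linarith
      exact mul_nonneg hc.le hu
  intro η hη x hx
  set ε : ℝ := min η ρ⁻¹ / Real.exp (C * T) with hεdef
  have hexpT : 0 < Real.exp (C * T) := Real.exp_pos _
  have hmin0 : 0 < min η ρ⁻¹ := lt_min hη (inv_pos.mpr hρ)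
  have hε : 0 < ε := div_pos hmin0 hexpT
  have hεexp : ∀ t, t ≤ T → ε * Real.exp (C * t) ≤ min η ρ⁻¹ := by
    intro t h2
    have hle : Real.exp (C * t) ≤ Real.exp (C * T) :=
      Real.exp_le_exp.mpr (mul_le_mul_of_nonneg_left h2 hC0.le)
    calc ε * Real.exp (C * t) ≤ ε * Real.exp (C * T) :=
          mul_le_mul_of_nonneg_left hle hε.le
      _ = min η ρ⁻¹ := by
          rw [hεdef]
          exact div_mul_cancel₀ _ (ne_of_gt hexpT)
  have inner : ∀ t ∈ Set.Icc (0:ℝ) T, ∀ y : Fin r → ℝ, y ⬝ᵥ y = 1 →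
      0 < y ⬝ᵥ (P t *ᵥ y) + ε * Real.exp (C * t) := by
    by_contra hbad
    push_neg at hbad
    obtain ⟨t₁, ht₁, y₁, hy₁, hy₁le⟩ := hbad
    set B : Set ℝ := {t | t ∈ Set.Icc (0:ℝ) T ∧ ∃ y : Fin r → ℝ,
      y ⬝ᵥ y = 1 ∧ y ⬝ᵥ (P t *ᵥ y) + ε * Real.exp (C * t) ≤ 0} with hBdef
    have hBne : B.Nonempty := ⟨t₁, ht₁, y₁, hy₁, hy₁le⟩
    have hBbdd : BddBelow B := ⟨0, fun t ht => ht.1.1⟩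
    set ts : ℝ := sInf B with hts
    obtain ⟨u, _, hu_tend, hu_mem⟩ := exists_seq_tendsto_sInf hBne hBbdd
    choose ys hys1 hys2 using fun n => (hu_mem n).2
    have hSc : IsCompact {y : Fin r → ℝ | y ⬝ᵥ y = 1} := by
      have hdc : Continuous fun y : Fin r → ℝ => y ⬝ᵥ y := by
        simp only [dotProduct]
        exact continuous_finset_sum _ fun i _ => (continuous_apply i).mul (continuous_apply i)
      have hclosed : IsClosed {y : Fin r → ℝ | y ⬝ᵥ y = 1} :=
        isClosed_eq hdc continuous_const
      have hbdd : Bornology.IsBounded {y : Fin r → ℝ | y ⬝ᵥ y = 1} := by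
        apply isBounded_iff_forall_norm_le.2
        refine ⟨1, fun y hy => ?_⟩
        rw [pi_norm_le_iff_of_nonneg zero_le_one]
        intro i
        simpa [Real.norm_eq_abs] using entry_le_one_of_unit hy i
      exact Metric.isCompact_of_isClosed_isBounded hclosed hbdd
    obtain ⟨yst, hystS, φ, hφ, hytend⟩ := hSc.tendsto_subseq (fun n => hys1 n)
    have hφtend : Filter.Tendsto (fun n => u (φ n)) Filter.atTop (nhds ts) :=
      hu_tend.comp hφ.tendsto_atTop
    have hFc : Continuous (fun q : ℝ × (Fin r → ℝ) =>
        q.2 ⬝ᵥ (P q.1 *ᵥ q.2) + ε * Real.exp (C * q.1)) := by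
      apply Continuous.add
      · have : (fun q : ℝ × (Fin r → ℝ) => q.2 ⬝ᵥ (P q.1 *ᵥ q.2))
            = fun q => ∑ i, ∑ j, q.2 i * P q.1 i j * q.2 j := by
          funext q
          simp only [dotProduct, Matrix.mulVec, Finset.mul_sum]
          exact Finset.sum_congr rfl fun i _ => Finset.sum_congr rfl fun j _ => by ring
        rw [this]
        apply continuous_finset_sum; intro i _
        apply continuous_finset_sum; intro j _
        exact (((continuous_apply i).comp continuous_snd).mul
          ((hPc i j).comp continuous_fst)).mul ((continuous_apply j).comp continuous_snd)
      · exact continuous_const.mul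
          (Real.continuous_exp.comp (continuous_const.mul continuous_fst))
    have htsIcc : ts ∈ Set.Icc (0:ℝ) T := by
      constructor
      · exact le_csInf hBne fun t ht => ht.1.1
      · obtain ⟨t₂, ht₂⟩ := hBne
        exact le_trans (csInf_le hBbdd ht₂) ht₂.1.2
    have hineq : yst ⬝ᵥ (P ts *ᵥ yst) + ε * Real.exp (C * ts) ≤ 0 := by
      have hpair : Filter.Tendsto (fun n => ((u (φ n)), ys (φ n))) Filter.atTop
          (nhds (ts, yst)) := hφtend.prodMk_nhds hytend
      have hseq := (hFc.tendsto (ts, yst)).comp hpair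
      exact le_of_tendsto hseq (Filter.Eventually.of_forall fun n => hys2 (φ n))
    have hts0 : 0 < ts := by
      rcases lt_or_eq_of_le htsIcc.1 with h | h
      · exact h
      · exfalso
        rw [← h] at hineq
        have h1 := hP0quad yst
        have h2 : (0:ℝ) < ε * Real.exp (C * 0) := by positivity
        linarith
    have hnotB : ∀ t, 0 ≤ t → t < ts → ∀ y : Fin r → ℝ, y ⬝ᵥ y = 1 →
        0 < y ⬝ᵥ (P t *ᵥ y) + ε * Real.exp (C * t) := by
      intro t h0 hlt y hy
      by_contra hle
      push_neg at hle
      have hmem : t ∈ B := ⟨⟨h0, le_trans hlt.le htsIcc.2⟩, y, hy, hle⟩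
      exact (notMem_of_lt_csInf hlt hBbdd) hmem
    set δ' : ℝ := ε * Real.exp (C * ts) with hδ'
    have hδ'0 : 0 < δ' := by positivity
    have hquad_ts : ∀ y : Fin r → ℝ, y ⬝ᵥ y = 1 → 0 ≤ y ⬝ᵥ (P ts *ᵥ y) + δ' := by
      intro y hy
      have hgc : Continuous fun t => y ⬝ᵥ (P t *ᵥ y) + ε * Real.exp (C * t) :=
        (quad_cont P hPc y).add
          (continuous_const.mul (Real.continuous_exp.comp (continuous_const.mul continuous_id)))
      have hev : ∀ᶠ t in nhdsWithin ts (Set.Iio ts),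
          0 ≤ y ⬝ᵥ (P t *ᵥ y) + ε * Real.exp (C * t) := by
        filter_upwards [Ioo_mem_nhdsLT_of_mem
          (⟨hts0, le_refl ts⟩ : ts ∈ Set.Ioc 0 ts)] with t ht
        exact (hnotB t ht.1.le ht.2 y hy).le
      exact ge_of_tendsto (hgc.continuousWithinAt) hev
    have hx0 : yst ⬝ᵥ (P ts *ᵥ yst) + δ' = 0 :=
      le_antisymm hineq (hquad_ts yst hystS)
    set H : Matrix (Fin r) (Fin r) ℝ := P ts + δ' • (1 : Matrix (Fin r) (Fin r) ℝ) with hH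
    have hmulH : ∀ y : Fin r → ℝ, H *ᵥ y = P ts *ᵥ y + δ' • y := by
      intro y
      rw [hH, Matrix.add_mulVec, Matrix.smul_mulVec, Matrix.one_mulVec]
    have hquadH : ∀ y : Fin r → ℝ, y ⬝ᵥ (H *ᵥ y) = y ⬝ᵥ (P ts *ᵥ y) + δ' * (y ⬝ᵥ y) := by
      intro y
      rw [hmulH y, dotProduct_add, dotProduct_smul, smul_eq_mul]
    have hHsym : Hᵀ = H := by
      rw [hH, Matrix.transpose_add, Matrix.transpose_smul, Matrix.transpose_one,
        hsym ts htsIcc.1]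
    have hHpos : ∀ y, 0 ≤ y ⬝ᵥ (H *ᵥ y) := by
      intro y
      rw [hquadH y]
      rcases eq_or_ne (y ⬝ᵥ y) 0 with h0 | h0
      · rw [eq_zero_of_dot_self_eq_zero h0]
        simp
      · obtain ⟨v, c, hc, hv1, hscale⟩ := unit_scale h0
        have h2 : y ⬝ᵥ y = c := by
          have := hscale 1
          simpa [Matrix.one_mulVec, hv1] using this
        rw [hscale (P ts), h2]
        nlinarith [hquad_ts v hv1, hc]
    have hnull : P ts *ᵥ yst = (-δ') • yst := by
      have h1 : yst ⬝ᵥ (H *ᵥ yst) = 0 := by rw [hquadH yst, hystS, mul_one, hx0]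
      have h2 := mulVec_eq_zero_of_quad_zero H hHsym hHpos yst h1
      rw [hmulH yst] at h2
      have h3 := eq_neg_of_add_eq_zero_left h2
      rw [h3, neg_smul]
    set E : Matrix (Fin r) (Fin r) ℝ := A * P ts + P ts * Aᵀ - ρ • (P ts * P ts) + R with hEdef
    have hdq : HasDerivAt (fun t => yst ⬝ᵥ (P t *ᵥ yst)) (yst ⬝ᵥ (E *ᵥ yst)) ts :=
      hasDerivAt_quad P E (fun i j => hP ts i j) yst
    have hdexp : HasDerivAt (fun t => ε * Real.exp (C * t))
        (ε * (C * Real.exp (C * ts))) ts := by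
      have h1 : HasDerivAt (fun t : ℝ => C * t) C ts := by
        simpa using (hasDerivAt_id ts).const_mul C
      have h2 := (h1.exp).const_mul ε
      rw [show ε * (C * Real.exp (C * ts)) = ε * (Real.exp (C * ts) * C) by ring]
      exact h2
    set d : ℝ := yst ⬝ᵥ (E *ᵥ yst) + ε * (C * Real.exp (C * ts)) with hd
    have hdh : HasDerivAt (fun t => yst ⬝ᵥ (P t *ᵥ yst) + ε * Real.exp (C * t)) d ts :=
      hdq.add hdexp
    have hd_nonpos : d ≤ 0 := by
      have hslope : Filter.Tendsto (slope (fun t => yst ⬝ᵥ (P t *ᵥ yst)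
          + ε * Real.exp (C * t)) ts) (nhdsWithin ts (Set.Iio ts)) (nhds d) :=
        (hasDerivAt_iff_tendsto_slope.mp hdh).mono_left
          (nhdsWithin_mono ts fun x hx => ne_of_lt hx)
      apply le_of_tendsto hslope
      filter_upwards [Ioo_mem_nhdsLT_of_mem
        (⟨hts0, le_refl ts⟩ : ts ∈ Set.Ioc 0 ts)] with t ht
      have hgt : 0 < yst ⬝ᵥ (P t *ᵥ yst) + ε * Real.exp (C * t) :=
        hnotB t ht.1.le ht.2 yst hystS
      rw [slope_def_field]
      apply div_nonpos_of_nonneg_of_nonpos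
      · show 0 ≤ (yst ⬝ᵥ (P t *ᵥ yst) + ε * Real.exp (C * t))
            - (yst ⬝ᵥ (P ts *ᵥ yst) + ε * Real.exp (C * ts))
        linarith [hgt, hx0]
      · linarith [ht.2]
    have hquadE : yst ⬝ᵥ (E *ᵥ yst)
        = -2 * δ' * (yst ⬝ᵥ (A *ᵥ yst)) - ρ * δ'^2 + yst ⬝ᵥ (R *ᵥ yst) := by
      have e1 : yst ⬝ᵥ ((A * P ts) *ᵥ yst) = -δ' * (yst ⬝ᵥ (A *ᵥ yst)) := by
        rw [← Matrix.mulVec_mulVec, hnull, Matrix.mulVec_smul, dotProduct_smul,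
          smul_eq_mul, neg_mul]
      have e2 : yst ⬝ᵥ ((P ts * Aᵀ) *ᵥ yst) = -δ' * (yst ⬝ᵥ (A *ᵥ yst)) := by
        rw [← Matrix.mulVec_mulVec, Matrix.dotProduct_mulVec]
        have hvm : yst ᵥ* P ts = P ts *ᵥ yst := by
          conv_lhs => rw [← hsym ts htsIcc.1]
          rw [Matrix.vecMul_transpose]
        rw [hvm, hnull, smul_dotProduct, smul_eq_mul, quad_transpose' A yst]
      have e3 : yst ⬝ᵥ ((ρ • (P ts * P ts)) *ᵥ yst) = ρ * δ'^2 := by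
        rw [Matrix.smul_mulVec, dotProduct_smul, smul_eq_mul,
          ← Matrix.mulVec_mulVec, hnull, Matrix.mulVec_smul, hnull]
        rw [dotProduct_smul, smul_eq_mul, dotProduct_smul, smul_eq_mul, hystS]
        ring
      rw [hEdef, Matrix.add_mulVec, Matrix.sub_mulVec, Matrix.add_mulVec,
        dotProduct_add, dotProduct_sub, dotProduct_add,
        e1, e2, e3]
      ring
    have hρδ : ρ * δ' ≤ 1 := by
      have h2 : δ' ≤ ρ⁻¹ := le_trans (hεexp ts htsIcc.2) (min_le_right _ _)
      calc ρ * δ' ≤ ρ * ρ⁻¹ := mul_le_mul_of_nonneg_left h2 hρ.le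
        _ = 1 := mul_inv_cancel₀ (ne_of_gt hρ)
    have hAbd : |yst ⬝ᵥ (A *ᵥ yst)| ≤ NA := quadA_bound A hystS
    have hRy := hRquad yst
    have hd_pos : 0 < d := by
      rw [hd, hquadE]
      have hδeq : ε * (C * Real.exp (C * ts)) = C * δ' := by rw [hδ']; ring
      rw [hδeq, hCdef]
      have h1 : yst ⬝ᵥ (A *ᵥ yst) ≤ NA := (abs_le.mp hAbd).2
      have h2 : ρ * δ' * δ' ≤ 1 * δ' := mul_le_mul_of_nonneg_right hρδ hδ'0.le
      nlinarith [hδ'0, h1, h2, hRy, mul_le_mul_of_nonneg_left h1 (by linarith : (0:ℝ) ≤ 2 * δ')]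
    linarith
  have hfin := inner T ⟨hT, le_refl T⟩ x hx
  have hεT : ε * Real.exp (C * T) ≤ η := le_trans (hεexp T (le_refl T)) (min_le_left _ _)
  linarith

lemma trace_inner {r : ℕ} (D M : Matrix (Fin r) (Fin r) ℝ) :
    Matrix.trace (Dᵀ * M) = ∑ i, ∑ j, D i j * M i j := by
  rw [Finset.sum_comm]
  simp only [Matrix.trace, Matrix.diag, Matrix.mul_apply, Matrix.transpose_apply]

/-- exponential Frobenius contraction of the Riccati flow when
`S = ρ·Id` and `μ(A) < 0`. -/
theorem riccati_frobenius_contraction {r : ℕ}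
    (A : Matrix (Fin r) (Fin r) ℝ) (ρ : ℝ) (hρ : 0 < ρ)
    (S : Matrix (Fin r) (Fin r) ℝ) (hSρ : S = ρ • (1 : Matrix (Fin r) (Fin r) ℝ))
    (R : Matrix (Fin r) (Fin r) ℝ) (hR : R.PosSemidef)
    (hμ : logNorm A < 0)
    (P Q : ℝ → Matrix (Fin r) (Fin r) ℝ)
    (hP : ∀ t i j, HasDerivAt (fun u => P u i j)
      ((A * P t + P t * Aᵀ - P t * S * P t + R) i j) t)
    (hQ : ∀ t i j, HasDerivAt (fun u => Q u i j)
      ((A * Q t + Q t * Aᵀ - Q t * S * Q t + R) i j) t)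
    (hP0 : (P 0).PosSemidef) (hQ0 : (Q 0).PosSemidef) :
    ∀ t ≥ (0 : ℝ),
      frobNorm (P t - Q t) ≤ Real.exp (2 * logNorm A * t) * frobNorm (P 0 - Q 0) := by
  -- normalize the ODEs
  have hnorm : ∀ M : Matrix (Fin r) (Fin r) ℝ, M * S * M = ρ • (M * M) := by
    intro M
    rw [hSρ, Matrix.mul_smul, Matrix.mul_one, Matrix.smul_mul]
  have hP' : ∀ t i j, HasDerivAt (fun u => P u i j)
      ((A * P t + P t * Aᵀ - ρ • (P t * P t) + R) i j) t := by
    intro t i j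
    have h := hP t i j
    rwa [hnorm (P t)] at h
  have hQ' : ∀ t i j, HasDerivAt (fun u => Q u i j)
      ((A * Q t + Q t * Aᵀ - ρ • (Q t * Q t) + R) i j) t := by
    intro t i j
    have h := hQ t i j
    rwa [hnorm (Q t)] at h
  have hPpos := quadpos_of_ode A R ρ hρ hR P hP' hP0
  have hQpos := quadpos_of_ode A R ρ hρ hR Q hQ' hQ0
  set μ : ℝ := logNorm A with hμdef
  set f : ℝ → ℝ := fun t => ∑ i, ∑ j, (P t i j - Q t i j)^2 with hfdef
  set f' : ℝ → ℝ := fun t => ∑ i, ∑ j, 2 * (P t i j - Q t i j)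
    * ((A * (P t - Q t) + (P t - Q t) * Aᵀ
        - ρ • (P t * (P t - Q t) + (P t - Q t) * Q t)) i j) with hf'def
  -- entrywise derivative of the difference
  have hDent : ∀ t i j, HasDerivAt (fun u => P u i j - Q u i j)
      ((A * (P t - Q t) + (P t - Q t) * Aᵀ
        - ρ • (P t * (P t - Q t) + (P t - Q t) * Q t)) i j) t := by
    intro t i j
    have h1 := (hP' t i j).sub (hQ' t i j)
    have h4 : HasDerivAt (fun u => P u i j - Q u i j)
        (((A * P t + P t * Aᵀ - ρ • (P t * P t) + R)
          - (A * Q t + Q t * Aᵀ - ρ • (Q t * Q t) + R)) i j) t := by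
      exact h1
    rwa [riccati_diff_identity A R ρ (P t) (Q t)] at h4
  have hfd : ∀ t, HasDerivAt f (f' t) t := by
    intro t
    apply HasDerivAt.fun_sum
    intro i _
    apply HasDerivAt.fun_sum
    intro j _
    have h1 := (hDent t i j).mul (hDent t i j)
    have h2 : HasDerivAt (fun u => (P u i j - Q u i j)^2)
        ((A * (P t - Q t) + (P t - Q t) * Aᵀ
          - ρ • (P t * (P t - Q t) + (P t - Q t) * Q t)) i j * (P t i j - Q t i j)
         + (P t i j - Q t i j) * (A * (P t - Q t) + (P t - Q t) * Aᵀ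
          - ρ • (P t * (P t - Q t) + (P t - Q t) * Q t)) i j) t := by
      have hfun : (fun u => (P u i j - Q u i j)^2)
          = fun u => (P u i j - Q u i j) * (P u i j - Q u i j) := by
        funext u; ring
      rw [hfun]; exact h1
    have h3 : (A * (P t - Q t) + (P t - Q t) * Aᵀ
          - ρ • (P t * (P t - Q t) + (P t - Q t) * Q t)) i j * (P t i j - Q t i j)
         + (P t i j - Q t i j) * (A * (P t - Q t) + (P t - Q t) * Aᵀ
          - ρ • (P t * (P t - Q t) + (P t - Q t) * Q t)) i j
        = 2 * (P t i j - Q t i j) * ((A * (P t - Q t) + (P t - Q t) * Aᵀ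
          - ρ • (P t * (P t - Q t) + (P t - Q t) * Q t)) i j) := by ring
    rw [h3] at h2
    exact h2
  -- the differential inequality
  have hbound : ∀ t, 0 ≤ t → f' t ≤ (4 * μ) * f t := by
    intro t ht
    have htr : f' t = 2 * Matrix.trace ((P t - Q t)ᵀ
        * (A * (P t - Q t) + (P t - Q t) * Aᵀ
          - ρ • (P t * (P t - Q t) + (P t - Q t) * Q t))) := by
      rw [trace_inner, hf'def]
      simp only [Matrix.sub_apply, Finset.mul_sum]
      exact Finset.sum_congr rfl fun i _ => Finset.sum_congr rfl fun j _ => by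
        simp [Matrix.sub_apply]; ring
    have htrexp := trace_riccati (P t - Q t) A (P t) (Q t) ρ
    have h1 : Matrix.trace ((P t - Q t)ᵀ * A * (P t - Q t))
        ≤ μ * Matrix.trace ((P t - Q t)ᵀ * (P t - Q t)) := by
      rw [trace_col, trace_sq_col, Finset.mul_sum]
      exact Finset.sum_le_sum fun j _ => quad_le_logNorm A _
    have h2 : Matrix.trace ((P t - Q t)ᵀ * (P t - Q t) * Aᵀ)
        ≤ μ * Matrix.trace ((P t - Q t)ᵀ * (P t - Q t)) := by
      rw [trace_row, trace_sq_row, Finset.mul_sum]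
      refine Finset.sum_le_sum fun i _ => ?_
      rw [quad_transpose']
      exact quad_le_logNorm A _
    have h3 : 0 ≤ Matrix.trace ((P t - Q t)ᵀ * P t * (P t - Q t)) := by
      rw [trace_col]
      exact Finset.sum_nonneg fun j _ => hPpos t ht _
    have h4 : 0 ≤ Matrix.trace ((P t - Q t)ᵀ * (P t - Q t) * Q t) := by
      rw [trace_row]
      exact Finset.sum_nonneg fun i _ => hQpos t ht _
    have hfeq : f t = Matrix.trace ((P t - Q t)ᵀ * (P t - Q t)) := by
      have he : f t = ∑ i, ∑ j, ((P t - Q t) i j)^2 := by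
        rw [hfdef]; simp only [Matrix.sub_apply]
      rw [he, ← trace_sq]
    rw [htr, htrexp, hfeq]
    nlinarith [mul_nonneg hρ.le (add_nonneg h3 h4)]
  -- Grönwall
  intro t ht
  have hgron := le_gronwallBound_of_liminf_deriv_right_le (f := f) (f' := f')
    (δ := f 0) (K := 4 * μ) (ε := 0) (a := 0) (b := t)
    (fun s _ => ((hfd s).continuousAt).continuousWithinAt)
    (fun s _ r' hr' => ((hfd s).hasDerivWithinAt.liminf_right_slope_le hr'))
    (le_refl _)
    (fun s hs => by simpa using hbound s hs.1)
  have hft := hgron t ⟨ht, le_refl t⟩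
  rw [sub_zero, gronwallBound_ε0] at hft
  -- convert to Frobenius norms
  have hfrob : ∀ s : ℝ, frobNorm (P s - Q s) = Real.sqrt (f s) := by
    intro s
    have he : f s = ∑ i, ∑ j, ((P s - Q s) i j)^2 := by
      rw [hfdef]; simp only [Matrix.sub_apply]
    rw [frobNorm, he, trace_sq]
  rw [hfrob t, hfrob 0]
  have hf0 : 0 ≤ f 0 :=
    Finset.sum_nonneg fun i _ => Finset.sum_nonneg fun j _ => sq_nonneg _
  calc Real.sqrt (f t) ≤ Real.sqrt (f 0 * Real.exp (4 * μ * t)) := Real.sqrt_le_sqrt hft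
    _ = Real.exp (2 * μ * t) * Real.sqrt (f 0) := by
        rw [Real.sqrt_mul hf0]
        have hsq : Real.exp (4 * μ * t) = (Real.exp (2 * μ * t))^2 := by
          rw [sq, ← Real.exp_add]
          ring_nf
        rw [hsq, Real.sqrt_sq (Real.exp_pos _).le]
        ring
end
end

section
/- For any r×r real matrices A and B with ‖A‖_F·‖B‖_F < 1/2, one has |log det(I − AB)| ≤ (3/2)·‖A‖_F·‖B‖_F. -/
open Matrix MeasureTheory Real
open scoped ENNReal

noncomputable section

section Aux

attribute [local instance] Matrix.frobeniusNormedAddCommGroup Matrix.frobeniusNormedRing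
  Matrix.frobeniusNormedAlgebra

variable {r : ℕ}

lemma frobNorm_eq_norm (A : Matrix (Fin r) (Fin r) ℝ) : frobNorm A = ‖A‖ := by
  rw [frobNorm, Matrix.frobenius_norm_def, ← Real.sqrt_eq_rpow]
  congr 1
  have h2 : ∀ a : ℝ, ‖a‖ ^ (2:ℝ) = a * a := by
    intro a
    rw [show ((2:ℝ)) = ((2:ℕ):ℝ) by norm_num, Real.rpow_natCast, Real.norm_eq_abs, sq_abs, sq]
  simp_rw [h2]
  rw [Matrix.trace]
  simp only [Matrix.diag_apply, Matrix.mul_apply, Matrix.transpose_apply]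
  exact Finset.sum_comm

lemma abs_trace_mul_le (X Y : Matrix (Fin r) (Fin r) ℝ) :
    |Matrix.trace (X * Y)| ≤ ‖X‖ * ‖Y‖ := by
  have hsq : ∀ (Z : Matrix (Fin r) (Fin r) ℝ) (i j : Fin r), ‖Z i j‖ ^ (2:ℝ) = Z i j ^ 2 := by
    intro Z i j
    rw [show ((2:ℝ)) = ((2:ℕ):ℝ) by norm_num, Real.rpow_natCast, Real.norm_eq_abs, sq_abs]
  have hX : Real.sqrt (∑ p : Fin r × Fin r, X p.1 p.2 ^ 2) = ‖X‖ := by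
    rw [Matrix.frobenius_norm_def, ← Real.sqrt_eq_rpow, Fintype.sum_prod_type]
    simp_rw [hsq]
  have hY : Real.sqrt (∑ p : Fin r × Fin r, Y p.2 p.1 ^ 2) = ‖Y‖ := by
    rw [Matrix.frobenius_norm_def, ← Real.sqrt_eq_rpow, Fintype.sum_prod_type]
    rw [Finset.sum_comm]
    simp_rw [hsq]
  have htr : Matrix.trace (X * Y) = ∑ p : Fin r × Fin r, X p.1 p.2 * Y p.2 p.1 := by
    rw [Fintype.sum_prod_type, Matrix.trace]
    simp only [Matrix.diag_apply, Matrix.mul_apply]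
  have h1 := Real.sum_mul_le_sqrt_mul_sqrt Finset.univ
    (fun p : Fin r × Fin r => X p.1 p.2) (fun p => Y p.2 p.1)
  have h2 := Real.sum_mul_le_sqrt_mul_sqrt Finset.univ
    (fun p : Fin r × Fin r => -X p.1 p.2) (fun p => Y p.2 p.1)
  simp only [neg_mul, Finset.sum_neg_distrib, neg_sq] at h2
  rw [htr, ← hX, ← hY, abs_le]
  constructor
  · linarith
  · linarith

lemma auxKeyBound (A B : Matrix (Fin r) (Fin r) ℝ) (h : frobNorm A * frobNorm B < 1 / 2) :
    |Real.log ((1 - A * B).det)| ≤ 3 / 2 * (frobNorm A * frobNorm B) := by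
  classical
  haveI : CompleteSpace (Matrix (Fin r) (Fin r) ℝ) := FiniteDimensional.complete ℝ _
  set M : Matrix (Fin r) (Fin r) ℝ := A * B with hMdef
  set x : ℝ := frobNorm A * frobNorm B with hxdef
  have hx0 : 0 ≤ x := mul_nonneg (Real.sqrt_nonneg _) (Real.sqrt_nonneg _)
  have hx2 : x < 1/2 := h
  have h1x : (0:ℝ) < 1 - x := by linarith
  have hM : ‖M‖ ≤ x := by
    rw [hxdef, frobNorm_eq_norm, frobNorm_eq_norm]; exact Matrix.frobenius_norm_mul A B
  have htrM : |Matrix.trace M| ≤ x := by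
    have h1 := abs_trace_mul_le A B
    rw [← frobNorm_eq_norm, ← frobNorm_eq_norm] at h1
    exact h1
  have hsm : ∀ t ∈ Set.Icc (0:ℝ) 1, ‖t • M‖ < 1 := by
    intro t ht
    rw [norm_smul]
    have ht1 : ‖t‖ ≤ 1 := by rw [Real.norm_eq_abs, abs_le]; exact ⟨by linarith [ht.1], ht.2⟩
    have : ‖t‖ * ‖M‖ ≤ 1 * x :=
      mul_le_mul ht1 hM (norm_nonneg _) zero_le_one
    linarith
  set J : ℝ → Matrix (Fin r) (Fin r) ℝ := fun t => Ring.inverse (1 - t • M) with hJdef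
  set g : ℝ → ℝ := fun t => (1 - t • M).det with hgdef
  have hunit : ∀ t ∈ Set.Icc (0:ℝ) 1, IsUnit ((1:Matrix (Fin r) (Fin r) ℝ) - t • M) :=
    fun t ht => isUnit_one_sub_of_norm_lt_one (hsm t ht)
  have hJP : ∀ t ∈ Set.Icc (0:ℝ) 1, (J t) * (1 - t • M) = 1 := fun t ht =>
    Ring.inverse_mul_cancel _ (hunit t ht)
  have hPJ : ∀ t ∈ Set.Icc (0:ℝ) 1, (1 - t • M) * J t = 1 := fun t ht =>
    Ring.mul_inverse_cancel _ (hunit t ht)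
  have hg0 : ∀ t ∈ Set.Icc (0:ℝ) 1, g t ≠ 0 := by
    intro t ht
    exact ((Matrix.isUnit_iff_isUnit_det _).mp (hunit t ht)).ne_zero
  -- the identity N = M + t • (N * M) for N = M * J t
  have hNid : ∀ t ∈ Set.Icc (0:ℝ) 1, M * J t = M + t • ((M * J t) * M) := by
    intro t ht
    have h1 : (M * J t) * (1 - t • M) = M := by
      rw [Matrix.mul_assoc, hJP t ht, Matrix.mul_one]
    rw [Matrix.mul_sub, Matrix.mul_one, Matrix.mul_smul] at h1
    exact sub_eq_iff_eq_add.mp h1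
  have hNle : ∀ t ∈ Set.Icc (0:ℝ) 1, ‖M * J t‖ ≤ x / (1 - x) := by
    intro t ht
    have ht1 : ‖t‖ ≤ 1 := by rw [Real.norm_eq_abs, abs_le]; exact ⟨by linarith [ht.1], ht.2⟩
    have hb : ‖M * J t‖ ≤ x + ‖M * J t‖ * x := by
      calc ‖M * J t‖ = ‖M + t • ((M * J t) * M)‖ := by rw [← hNid t ht]
        _ ≤ ‖M‖ + ‖t • ((M * J t) * M)‖ := norm_add_le _ _
        _ = ‖M‖ + ‖t‖ * ‖(M * J t) * M‖ := by rw [norm_smul]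
        _ ≤ x + 1 * (‖M * J t‖ * ‖M‖) := by
            refine add_le_add hM (mul_le_mul ht1 (norm_mul_le _ _) (norm_nonneg _) zero_le_one)
        _ ≤ x + 1 * (‖M * J t‖ * x) := by
            refine add_le_add le_rfl ?_
            rw [one_mul, one_mul]
            exact mul_le_mul_of_nonneg_left hM (norm_nonneg _)
        _ = x + ‖M * J t‖ * x := by ring
    rw [le_div_iff₀ h1x]
    nlinarith [norm_nonneg (M * J t)]
  have htrN : ∀ t ∈ Set.Icc (0:ℝ) 1,
      |Matrix.trace (M * J t)| ≤ x + t * (x^2 / (1 - x)) := by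
    intro t ht
    have h2 : Matrix.trace (M * J t)
        = Matrix.trace M + t * Matrix.trace ((M * J t) * M) := by
      conv_lhs => rw [hNid t ht]
      rw [Matrix.trace_add, Matrix.trace_smul, smul_eq_mul]
    have h3 : |Matrix.trace ((M * J t) * M)| ≤ (x/(1-x)) * x :=
      le_trans (abs_trace_mul_le _ _)
        (mul_le_mul (hNle t ht) hM (norm_nonneg _) (div_nonneg hx0 h1x.le))
    have ht0 : 0 ≤ t := ht.1
    rw [h2]
    calc |Matrix.trace M + t * Matrix.trace (M * J t * M)|
        ≤ |Matrix.trace M| + |t * Matrix.trace (M * J t * M)| := abs_add_le _ _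
      _ = |Matrix.trace M| + t * |Matrix.trace (M * J t * M)| := by
          rw [abs_mul, abs_of_nonneg ht0]
      _ ≤ x + t * ((x/(1-x)) * x) := add_le_add htrM (mul_le_mul_of_nonneg_left h3 ht0)
      _ = x + t * (x^2/(1-x)) := by ring
  -- derivative of g
  have hgderiv : ∀ t₀ ∈ Set.Icc (0:ℝ) 1,
      HasDerivAt g (-(g t₀ * Matrix.trace (M * J t₀))) t₀ := by
    intro t₀ ht₀
    set K : Matrix (Fin r) (Fin r) ℝ := J t₀ * M with hK
    have hfact : ∀ t : ℝ, (1 : Matrix (Fin r) (Fin r) ℝ) - t • M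
        = (1 - t₀ • M) * (1 - (t - t₀) • K) := by
      intro t
      rw [Matrix.mul_sub, Matrix.mul_one, Matrix.mul_smul, ← Matrix.mul_assoc,
        hPJ t₀ ht₀, Matrix.one_mul, sub_smul, sub_sub]
      congr 1
      abel
    set Q : Polynomial ℝ :=
      (Matrix.det (1 + (Polynomial.X : Polynomial ℝ) • (-K).map Polynomial.C)).divX.divX with hQ
    have hgt : ∀ t : ℝ, g t
        = g t₀ * (1 + Matrix.trace (-K) * (t - t₀) + Q.eval (t - t₀) * (t - t₀)^2) := by
      intro t
      show (1 - t • M).det = ((1:Matrix (Fin r) (Fin r) ℝ) - t₀ • M).det * _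
      rw [hfact t, Matrix.det_mul]
      congr 1
      have hrw : (1 : Matrix (Fin r) (Fin r) ℝ) - (t - t₀) • K = 1 + (t - t₀) • (-K) := by
        rw [smul_neg, ← sub_eq_add_neg]
      rw [hrw, Matrix.det_one_add_smul]
    set p : Polynomial ℝ := Polynomial.C 1 + Polynomial.C (Matrix.trace (-K)) * Polynomial.X
      + Q * Polynomial.X^2 with hp
    have hgp : ∀ t : ℝ, g t = g t₀ * p.eval (t - t₀) := by
      intro t
      rw [hgt t, hp]
      simp [Polynomial.eval_add, Polynomial.eval_mul, Polynomial.eval_pow]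
    have hpd : HasDerivAt (fun t : ℝ => g t₀ * p.eval (t - t₀)) (g t₀ * p.derivative.eval 0) t₀ := by
      have h2 : HasDerivAt (fun t : ℝ => p.eval (t - t₀))
          (p.derivative.eval (t₀ - t₀)) t₀ :=
        HasDerivAt.comp_sub_const t₀ t₀ (p.hasDerivAt (t₀ - t₀))
      have h3 := h2.const_mul (g t₀)
      simpa using h3
    have hpd0 : p.derivative.eval 0 = Matrix.trace (-K) := by
      simp [hp, Polynomial.derivative_mul, Polynomial.derivative_pow]
    rw [hpd0] at hpd
    have hres : HasDerivAt g (g t₀ * Matrix.trace (-K)) t₀ :=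
      hpd.congr_of_eventuallyEq (Filter.Eventually.of_forall hgp)
    have : g t₀ * Matrix.trace (-K) = -(g t₀ * Matrix.trace (M * J t₀)) := by
      rw [Matrix.trace_neg, hK, Matrix.trace_mul_comm]
      ring
    rwa [this] at hres
  -- derivative of log ∘ g
  set L : ℝ → ℝ := fun t => Real.log (g t) with hLdef
  have hLd : ∀ t ∈ Set.Icc (0:ℝ) 1,
      HasDerivAt L (-(Matrix.trace (M * J t))) t := by
    intro t ht
    have h1 := (hgderiv t ht).log (hg0 t ht)
    have h2 : -(g t * Matrix.trace (M * J t)) / g t = -(Matrix.trace (M * J t)) := by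
      rw [neg_div, mul_div_cancel_left₀ _ (hg0 t ht)]
    rwa [h2] at h1
  set c : ℝ := x^2 / (1 - x) with hc
  have hc0 : 0 ≤ c := div_nonneg (sq_nonneg x) h1x.le
  set φ : ℝ → ℝ := fun t => x * t + c * t^2 / 2 with hφ
  have hφd : ∀ t : ℝ, HasDerivAt φ (x + c * t) t := by
    intro t
    have h1 : HasDerivAt (fun s : ℝ => x * s) x t := by
      simpa using (hasDerivAt_id t).const_mul x
    have h2 : HasDerivAt (fun s : ℝ => c * s^2 / 2) (c * t) t := by
      have h := ((hasDerivAt_pow 2 t).const_mul c).div_const 2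
      refine h.congr_deriv ?_
      ring
    exact h1.add h2
  have mono : ∀ ε : ℝ, ε = 1 ∨ ε = -1 → φ 0 + ε * L 0 ≤ φ 1 + ε * L 1 := by
    intro ε hε
    have hD : ∀ t ∈ Set.Icc (0:ℝ) 1, HasDerivAt (fun s => φ s + ε * L s)
        ((x + c * t) + ε * (-(Matrix.trace (M * J t)))) t := fun t ht =>
      (hφd t).add ((hLd t ht).const_mul ε)
    have hcont : ContinuousOn (fun s => φ s + ε * L s) (Set.Icc 0 1) :=
      fun t ht => (hD t ht).continuousAt.continuousWithinAt
    have hmono := monotoneOn_of_deriv_nonneg (convex_Icc (0:ℝ) 1) hcont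
      (fun t ht => ((hD t (interior_subset ht)).differentiableAt.differentiableWithinAt))
      (fun t ht => by
        rw [interior_Icc] at ht
        have ht' : t ∈ Set.Icc (0:ℝ) 1 := Set.mem_Icc_of_Ioo ht
        rw [(hD t ht').deriv]
        have h1 := htrN t ht'
        rcases hε with rfl | rfl
        · rw [one_mul]
          have := neg_abs_le (Matrix.trace (M * J t))
          have : -(Matrix.trace (M * J t)) ≥ -(x + t * c) := by
            rw [hc]
            rw [abs_le] at h1
            linarith [h1.2]
          linarith
        · have : -1 * -(Matrix.trace (M * J t)) ≥ -(x + t * c) := by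
            rw [hc]
            rw [abs_le] at h1
            linarith [h1.1]
          linarith)
    exact hmono (Set.left_mem_Icc.mpr zero_le_one) (Set.right_mem_Icc.mpr zero_le_one) zero_le_one
  have hL0 : L 0 = 0 := by
    have : g 0 = 1 := by
      show ((1:Matrix (Fin r) (Fin r) ℝ) - (0:ℝ) • M).det = 1
      rw [zero_smul, sub_zero, Matrix.det_one]
    rw [hLdef]
    simp only [this]
    exact Real.log_one
  have hφ0 : φ 0 = 0 := by rw [hφ]; ring_nf
  have hφ1 : φ 1 = x + c / 2 := by rw [hφ]; ring_nf
  have hub : L 1 ≤ x + c / 2 := by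
    have := mono (-1) (Or.inr rfl)
    rw [hL0, hφ0, hφ1] at this
    linarith
  have hlb : -(x + c / 2) ≤ L 1 := by
    have := mono 1 (Or.inl rfl)
    rw [hL0, hφ0, hφ1] at this
    linarith
  have hL1 : L 1 = Real.log ((1 - M).det) := by
    rw [hLdef]
    show Real.log ((1 - (1:ℝ) • M).det) = _
    rw [one_smul]
  have hfin : x + c / 2 ≤ 3 / 2 * x := by
    have hcx : c ≤ x := by
      rw [hc, div_le_iff₀ h1x]
      nlinarith
    linarith
  rw [← hL1, abs_le]
  constructor <;> [linarith; linarith]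

end Aux

/-- `|log det(I − AB)| ≤ (3/2)‖A‖_F‖B‖_F` when `‖A‖_F‖B‖_F < 1/2`. -/


theorem abs_log_det_one_sub_mul_le {r : ℕ}
    (A B : Matrix (Fin r) (Fin r) ℝ)
    (h : frobNorm A * frobNorm B < 1 / 2) :
    |Real.log ((1 - A * B).det)| ≤ 3 / 2 * (frobNorm A * frobNorm B) := auxKeyBound A B h
end
end
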